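/- The positive semidefinite rank is an ultraweak monotone: if C ⊑ D for row-stochastic matrices, then rank_psd(C) ≤ rank_psd(D). -/

import Mathlib

open Matrix BigOperators
open scoped ComplexOrder

def RowStochastic {a b : ℕ} (M : Matrix (Fin a) (Fin b) ℝ) : Prop :=
  (∀ i j, 0 ≤ M i j) ∧ ∀ i, ∑ j, M i j = 1

def UW {a b c d : ℕ} (C : Matrix (Fin a) (Fin b) ℝ) (D : Matrix (Fin c) (Fin d) ℝ) : Prop :=
  ∃ (L : Matrix (Fin a) (Fin c) ℝ) (R : Matrix (Fin d) (Fin b) ℝ),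
    RowStochastic L ∧ RowStochastic R ∧ C = L * D * R

/-- The positive semidefinite rank: the smallest k such that C_{ij} = tr(A_i B_j)
for k×k positive semidefinite matrices A_i, B_j. -/
noncomputable def psdRank {n m : ℕ} (C : Matrix (Fin n) (Fin m) ℝ) : ℕ :=
  sInf {k : ℕ | ∃ (A : Fin n → Matrix (Fin k) (Fin k) ℂ) (B : Fin m → Matrix (Fin k) (Fin k) ℂ),
    (∀ i, (A i).PosSemidef) ∧ (∀ j, (B j).PosSemidef) ∧
    ∀ i j, (C i j : ℂ) = (A i * B j).trace}

lemma psd_real_smul {k : ℕ} {M : Matrix (Fin k) (Fin k) ℂ} (hM : M.PosSemidef)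
    {r : ℝ} (hr : 0 ≤ r) : ((r : ℂ) • M).PosSemidef := by
  constructor
  · unfold Matrix.IsHermitian
    rw [conjTranspose_smul, hM.1]
    congr 1
    simp
  · intro x
    have := hM.2 x
    exact (hM.smul (show (0:ℂ) ≤ (r:ℂ) by exact_mod_cast hr)).2 x

lemma psd_sum {k n : ℕ} (A : Fin n → Matrix (Fin k) (Fin k) ℂ)
    (hA : ∀ i, (A i).PosSemidef) : (∑ i, A i).PosSemidef := by
  classical
  induction (Finset.univ : Finset (Fin n)) using Finset.induction with
  | empty => simpa using Matrix.PosSemidef.zero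
  | insert _ _ h ih =>
    rw [Finset.sum_insert h]
    exact (hA _).add ih

/-- The positive semidefinite rank is an ultraweak monotone. -/
theorem psdRank_uw_monotone {a b c d : ℕ} (C : Matrix (Fin a) (Fin b) ℝ)
    (D : Matrix (Fin c) (Fin d) ℝ) (hC : RowStochastic C) (hD : RowStochastic D)
    (h : UW C D) : psdRank C ≤ psdRank D := by
  classical
  obtain ⟨L, R, hL, hR, hCLDR⟩ := h
  -- the set for D is nonempty
  have hDne : {k : ℕ | ∃ (A : Fin c → Matrix (Fin k) (Fin k) ℂ)
      (B : Fin d → Matrix (Fin k) (Fin k) ℂ),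
      (∀ i, (A i).PosSemidef) ∧ (∀ j, (B j).PosSemidef) ∧
      ∀ i j, (D i j : ℂ) = (A i * B j).trace}.Nonempty := by
    refine ⟨c, fun p => Matrix.single p p 1,
      fun q => Matrix.diagonal (fun p => (D p q : ℂ)), ?_, ?_, ?_⟩
    · intro p
      show (Matrix.single p p (1 : ℂ)).PosSemidef
      have : Matrix.single p p (1 : ℂ) =
          Matrix.diagonal (fun i => if i = p then (1 : ℂ) else 0) := by
        ext i j
        simp [Matrix.single, Matrix.diagonal, eq_comm]
        aesop
      rw [this]
      refine Matrix.PosSemidef.diagonal fun i => ?_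
      show (0:ℂ) ≤ _
      by_cases hi : i = p <;> simp [hi]
    · intro q
      refine Matrix.PosSemidef.diagonal fun i => ?_
      show (0:ℂ) ≤ (D i q : ℂ)
      exact_mod_cast hD.1 i q
    · intro p q
      rw [Matrix.trace]
      simp [Matrix.mul_apply, Matrix.single, Matrix.diagonal, Matrix.diag]
  set k := psdRank D with hk
  have hmem := Nat.sInf_mem hDne
  rw [← psdRank] at hmem
  obtain ⟨A, B, hA, hB, hAB⟩ := hmem
  apply Nat.sInf_le
  refine ⟨fun i => ∑ p, (L i p : ℂ) • A p, fun j => ∑ q, (R q j : ℂ) • B q, ?_, ?_, ?_⟩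
  · intro i
    exact psd_sum _ (fun p => psd_real_smul (hA p) (hL.1 i p))
  · intro j
    exact psd_sum _ (fun q => psd_real_smul (hB q) (hR.1 q j))
  · intro i j
    rw [Finset.sum_mul]
    rw [Matrix.trace_sum]
    have : ∀ p, (((L i p : ℂ) • A p) * ∑ q, (R q j : ℂ) • B q).trace
        = ∑ q, (L i p : ℂ) * (R q j : ℂ) * (A p * B q).trace := by
      intro p
      rw [Finset.mul_sum, Matrix.trace_sum]
      refine Finset.sum_congr rfl fun q _ => ?_
      rw [smul_mul_smul_comm, Matrix.trace_smul]
      simp [mul_assoc]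
    simp_rw [this]
    have hc : C i j = ∑ p, ∑ q, L i p * D p q * R q j := by
      rw [hCLDR]
      simp only [Matrix.mul_apply, Finset.sum_mul]
      rw [Finset.sum_comm]
    rw [hc]
    push_cast
    refine Finset.sum_congr rfl fun p _ => ?_
    refine Finset.sum_congr rfl fun q _ => ?_
    rw [hAB p q]
    ring
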